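/- Let M be a matroid of finite rank m and let S be a finite sequence of non-loop elements of M with |S| > m(r-1). Then there exist r pairwise disjoint subsequences S_1, …, S_r of S with ⋂_{i=1}^r cl(S_i) ≠ cl(∅); in particular the intersection of the closures contains a non-loop element. -/

import Mathlib

open Set

lemma matroidal_tverberg_aux {α ι : Type*} [Fintype ι] [DecidableEq ι]
    (M : Matroid α) (m : ℕ)
    (hind : ∀ I : Set α, M.Indep I → I.Finite ∧ I.ncard ≤ m)
    (S : ι → α) (hS : ∀ i, S i ∈ M.E) (hS' : ∀ i, S i ∉ M.closure ∅) :
    ∀ r : ℕ, 1 ≤ r → ∀ T : Finset ι, T.card > m * (r - 1) →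
    ∃ J : Fin r → Finset ι,
      (∀ k, J k ⊆ T) ∧
      (∀ i j, i ≠ j → Disjoint (J i) (J j)) ∧
      ∃ e, e ∉ M.closure ∅ ∧ ∀ k, e ∈ M.closure (S '' (J k : Set ι)) := by
  intro r hr
  induction r, hr using Nat.le_induction with
  | base =>
    intro T hT
    simp only [Nat.sub_self, Nat.mul_zero] at hT
    obtain ⟨i0, hi0⟩ := Finset.card_pos.mp hT
    refine ⟨fun _ => {i0}, fun k => by simpa using hi0, ?_, S i0, hS' i0, ?_⟩
    · intro i j hij; exact absurd (Subsingleton.elim i j) hij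
    · intro k
      have : S i0 ∈ M.closure {S i0} :=
        M.subset_closure {S i0} (by simpa using hS i0) rfl
      simpa using this
  | succ r hr IH =>
    intro T hT
    simp only [Nat.add_sub_cancel] at hT
    -- find a basis of S '' T
    have hXE : S '' (T : Set ι) ⊆ M.E := by
      rintro x ⟨i, _, rfl⟩; exact hS i
    obtain ⟨I₀, hI₀⟩ := M.exists_isBasis (S '' (T : Set ι)) hXE
    obtain ⟨hI₀fin, hI₀card⟩ := hind I₀ hI₀.indep
    -- choose preimage indices
    have hT0 : T.Nonempty := Finset.card_pos.mp (lt_of_le_of_lt (Nat.zero_le _) hT)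
    have : Nonempty ι := ⟨hT0.choose⟩
    have hpre : ∀ x ∈ I₀, ∃ i, i ∈ T ∧ S i = x := by
      intro x hx
      obtain ⟨i, hi, rfl⟩ := hI₀.subset hx
      exact ⟨i, hi, rfl⟩
    classical
    set g : α → ι := fun x => if h : ∃ i, i ∈ T ∧ S i = x then h.choose else hT0.choose with hg
    have hgspec : ∀ x ∈ I₀, g x ∈ T ∧ S (g x) = x := by
      intro x hx
      have h := hpre x hx
      simp only [hg, dif_pos h]
      exact h.choose_spec
    set J' : Finset ι := hI₀fin.toFinset.image g with hJ'
    have hJ'T : J' ⊆ T := by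
      intro i hi
      simp only [hJ', Finset.mem_image, Set.Finite.mem_toFinset] at hi
      obtain ⟨x, hx, rfl⟩ := hi
      exact (hgspec x hx).1
    have hI₀sub : I₀ ⊆ S '' (J' : Set ι) := by
      intro x hx
      exact ⟨g x, Finset.mem_coe.mpr (Finset.mem_image_of_mem g (hI₀fin.mem_toFinset.mpr hx)),
        (hgspec x hx).2⟩
    have hJ'card : J'.card ≤ m := by
      calc J'.card ≤ hI₀fin.toFinset.card := Finset.card_image_le
        _ = I₀.ncard := by rw [Set.ncard_eq_toFinset_card I₀ hI₀fin]
        _ ≤ m := hI₀card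
    -- apply IH to T \ J'
    have hm : m * (r - 1) + m = m * r := by
      have : (r - 1) + 1 = r := Nat.succ_pred_eq_of_pos hr
      calc m * (r - 1) + m = m * ((r - 1) + 1) := by ring
        _ = m * r := by rw [this]
    have hTJ' : (T \ J').card > m * (r - 1) := by
      rw [Finset.card_sdiff_of_subset hJ'T]
      omega
    obtain ⟨J, hJsub, hJdisj, e, he, heJ⟩ := IH (T \ J') hTJ'
    -- closure chain
    have hkey : e ∈ M.closure (S '' (J' : Set ι)) := by
      have h1 : e ∈ M.closure (S '' ((J ⟨0, hr⟩ : Finset ι) : Set ι)) := heJ _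
      have h2 : M.closure (S '' ((J ⟨0, hr⟩ : Finset ι) : Set ι)) ⊆
          M.closure (S '' (T : Set ι)) := by
        apply M.closure_subset_closure
        apply Set.image_mono
        intro i hi
        exact Finset.mem_of_subset (Finset.sdiff_subset) (hJsub _ hi)
      have h3 : M.closure (S '' (T : Set ι)) = M.closure I₀ := hI₀.closure_eq_closure.symm
      have h4 : M.closure I₀ ⊆ M.closure (S '' (J' : Set ι)) :=
        M.closure_subset_closure hI₀sub
      exact h4 (h3 ▸ h2 h1)
    refine ⟨Fin.cases J' J, ?_, ?_, e, he, ?_⟩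
    · intro k
      induction k using Fin.cases with
      | zero => simpa using hJ'T
      | succ k => simpa using (hJsub k).trans (Finset.sdiff_subset)
    · have hd : ∀ k, Disjoint (J k) J' := fun k =>
        Finset.disjoint_of_subset_left (hJsub k) (Finset.sdiff_disjoint)
      intro i j hij
      induction i using Fin.cases with
      | zero =>
        induction j using Fin.cases with
        | zero => exact absurd rfl hij
        | succ j => simpa using (hd j).symm
      | succ i =>
        induction j using Fin.cases with
        | zero => simpa using hd i
        | succ j =>
          have : i ≠ j := fun h => hij (by rw [h])
          simpa using hJdisj i j this
    · intro k
      induction k using Fin.cases with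
      | zero => simpa using hkey
      | succ k => simpa using heJ k

/-- Matroidal Tverberg, weak form: there are `r` pairwise disjoint subsequences
whose closures have intersection different from the closure of the empty set. -/
theorem matroidal_tverberg_inter {α ι : Type*} [Fintype ι] [DecidableEq ι]
    (M : Matroid α) (m r : ℕ) (hr : 1 ≤ r)
    (B : Set α) (hB : M.IsBase B) (hBfin : B.Finite) (hBm : B.ncard = m)
    (S : ι → α) (hS : ∀ i, S i ∈ M.E) (hS' : ∀ i, S i ∉ M.closure ∅)
    (hlen : Fintype.card ι > m * (r - 1)) :
    ∃ J : Fin r → Finset ι,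
      (∀ i j, i ≠ j → Disjoint (J i) (J j)) ∧
      (⋂ i : Fin r, M.closure (S '' (J i : Set ι))) ≠ M.closure ∅ := by
  have : M.RankFinite := hB.rankFinite_of_finite hBfin
  have hind : ∀ I : Set α, M.Indep I → I.Finite ∧ I.ncard ≤ m := by
    intro I hI
    obtain ⟨B', hB', hIB'⟩ := hI.exists_isBase_superset
    have hB'fin : B'.Finite := hB'.finite
    refine ⟨hB'fin.subset hIB', ?_⟩
    calc I.ncard ≤ B'.ncard := Set.ncard_le_ncard hIB' hB'fin
      _ = B.ncard := hB'.ncard_eq_ncard_of_isBase hB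
      _ = m := hBm
  obtain ⟨J, hJsub, hJdisj, e, he, heJ⟩ :=
    matroidal_tverberg_aux M m hind S hS hS' r hr Finset.univ
      (by simpa using hlen)
  refine ⟨J, hJdisj, ?_⟩
  intro heq
  apply he
  rw [← heq]
  exact Set.mem_iInter.mpr heJ
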